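/- Let J be a finite set of jobs, where job j has a release date r_j ∈ ℕ, a deadline d_j ∈ ℕ and a processing requirement p_j ∈ ℕ. Suppose that for every pair of naturals s ≤ t we have Σ_{j : s ≤ r_j and d_j ≤ t} p_j ≤ t − s. Then there exists a family (A_j)_{j∈J} of pairwise disjoint finite sets of naturals with |A_j| = p_j and r_j ≤ a < d_j for every a ∈ A_j (i.e., a preemptive single-machine schedule that gives each job j exactly p_j unit time slots between its release date and its deadline). -/

import Mathlib

open Finset

lemma schedMain {J : Type} [Fintype J] [DecidableEq J] (r d p : J → ℕ)
    (h : ∀ s t : ℕ, s ≤ t →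
      (∑ j ∈ Finset.univ.filter fun j => s ≤ r j ∧ d j ≤ t, p j) ≤ t - s)
    (T : Finset J) :
    (∑ j ∈ T, p j) ≤ (T.biUnion fun j => Finset.Ico (r j) (d j)).card := by
  classical
  induction T using Finset.strongInductionOn with
  | _ T ih =>
  have hdeg : ∀ j, d j ≤ r j → p j = 0 := by
    intro j hj
    have h1 := h (r j) (r j) le_rfl
    have hmem : j ∈ Finset.univ.filter fun i => r j ≤ r i ∧ d i ≤ r j := by
      simp [hj]
    have h2 := Finset.single_le_sum (f := p) (fun i _ => Nat.zero_le _) hmem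
    omega
  by_cases hne : (T.filter (fun j => r j < d j)).Nonempty
  · set T' := T.filter (fun j => r j < d j) with hT'
    set s := (T'.image r).min' (hne.image r) with hs
    obtain ⟨j0, hj0, hrj0⟩ := Finset.mem_image.mp ((T'.image r).min'_mem (hne.image r))
    have hj0T : j0 ∈ T := (Finset.mem_filter.mp hj0).1
    have hj0p : r j0 < d j0 := (Finset.mem_filter.mp hj0).2
    set U := T.biUnion fun j => Finset.Ico (r j) (d j) with hU
    have hsU : s ∈ U := by
      refine Finset.mem_biUnion.mpr ⟨j0, hj0T, ?_⟩
      rw [Finset.mem_Ico]; omega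
    have hex : ∃ n, s ≤ n ∧ n ∉ U := by
      refine ⟨U.max' ⟨s, hsU⟩ + 1, ?_, ?_⟩
      · exact le_trans (U.le_max' s hsU) (Nat.le_succ _)
      · intro hmem
        exact absurd (U.le_max' _ hmem) (by omega)
    obtain ⟨t, hst, htU, hbelow⟩ : ∃ t, s ≤ t ∧ t ∉ U ∧ ∀ x, s ≤ x → x < t → x ∈ U :=
      ⟨Nat.find hex, (Nat.find_spec hex).1, (Nat.find_spec hex).2, fun x hsx hxt => by
        by_contra hx; exact Nat.find_min hex hxt ⟨hsx, hx⟩⟩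
    have hslt : s < t := lt_of_le_of_ne hst (fun heq => htU (heq ▸ hsU))
    set T1 := T.filter (fun j => r j < t) with hT1
    set T2 := T.filter (fun j => ¬ r j < t) with hT2
    -- sum over T1
    have hmin : ∀ j ∈ T', s ≤ r j := fun j hj =>
      (T'.image r).min'_le _ (Finset.mem_image_of_mem r hj)
    have hsum1 : (∑ j ∈ T1, p j) ≤ t - s := by
      have hsplit := Finset.sum_filter_add_sum_filter_not T1 (fun j => r j < d j) p
      have hzero : (∑ j ∈ T1.filter (fun j => ¬ r j < d j), p j) = 0 :=
        Finset.sum_eq_zero fun j hj => hdeg j (by have := (Finset.mem_filter.mp hj).2; omega)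
      have hsub : T1.filter (fun j => r j < d j) ⊆
          Finset.univ.filter fun j => s ≤ r j ∧ d j ≤ t := by
        intro j hj
        obtain ⟨hjT1, hjp⟩ := Finset.mem_filter.mp hj
        obtain ⟨hjT, hjrt⟩ := Finset.mem_filter.mp hjT1
        have hjT' : j ∈ T' := Finset.mem_filter.mpr ⟨hjT, hjp⟩
        have hsr : s ≤ r j := hmin j hjT'
        have hdt : d j ≤ t := by
          by_contra hdt
          exact htU (Finset.mem_biUnion.mpr ⟨j, hjT, Finset.mem_Ico.mpr ⟨by omega, by omega⟩⟩)
        exact Finset.mem_filter.mpr ⟨Finset.mem_univ j, hsr, hdt⟩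
      have := Finset.sum_le_sum_of_subset hsub (f := p)
      have hht := h s t hst
      omega
    -- induction for T2
    have hT2ss : T2 ⊂ T := by
      refine Finset.ssubset_iff_of_subset (Finset.filter_subset _ _) |>.mpr ⟨j0, hj0T, ?_⟩
      simp [hT2]
      intro _
      omega
    have hsum2 := ih T2 hT2ss
    -- cardinalities
    have hdisj : Disjoint (Finset.Ico s t) (T2.biUnion fun j => Finset.Ico (r j) (d j)) := by
      rw [Finset.disjoint_left]
      intro x hx hx2
      obtain ⟨j, hjT2, hjx⟩ := Finset.mem_biUnion.mp hx2
      have := (Finset.mem_filter.mp hjT2).2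
      rw [Finset.mem_Ico] at hx hjx
      omega
    have hsubU : Finset.Ico s t ∪ (T2.biUnion fun j => Finset.Ico (r j) (d j)) ⊆ U := by
      intro x hx
      rcases Finset.mem_union.mp hx with hx | hx
      · rw [Finset.mem_Ico] at hx; exact hbelow x hx.1 hx.2
      · obtain ⟨j, hjT2, hjx⟩ := Finset.mem_biUnion.mp hx
        exact Finset.mem_biUnion.mpr ⟨j, (Finset.mem_filter.mp hjT2).1, hjx⟩
    have hcard : (t - s) + (T2.biUnion fun j => Finset.Ico (r j) (d j)).card ≤ U.card := by
      have := Finset.card_le_card hsubU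
      rw [Finset.card_union_of_disjoint hdisj, Nat.card_Ico] at this
      omega
    have hsplitT : (∑ j ∈ T1, p j) + (∑ j ∈ T2, p j) = ∑ j ∈ T, p j := by
      rw [hT1, hT2]; exact Finset.sum_filter_add_sum_filter_not T _ p
    omega
  · have : ∀ j ∈ T, p j = 0 := by
      intro j hj
      by_contra hp
      have : r j < d j := by
        by_contra hrd
        exact hp (hdeg j (by omega))
      exact hne ⟨j, Finset.mem_filter.mpr ⟨hj, this⟩⟩
    rw [Finset.sum_eq_zero this]
    exact Nat.zero_le _

theorem stmt1 {J : Type} [Fintype J] (r d p : J → ℕ)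
    (h : ∀ s t : ℕ, s ≤ t →
      (∑ j ∈ Finset.univ.filter fun j => s ≤ r j ∧ d j ≤ t, p j) ≤ t - s) :
    ∃ A : J → Finset ℕ,
      (∀ j j', j ≠ j' → Disjoint (A j) (A j')) ∧
      (∀ j, (A j).card = p j) ∧
      (∀ j, ∀ a ∈ A j, r j ≤ a ∧ a < d j) := by
  classical
  have hall : ∀ S : Finset (Σ j : J, Fin (p j)),
      S.card ≤ (S.biUnion fun x => Finset.Ico (r x.1) (d x.1)).card := by
    intro S
    set T := S.image Sigma.fst with hT
    have h1 : S ⊆ T.sigma fun j => (Finset.univ : Finset (Fin (p j))) := by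
      intro x hx
      exact Finset.mem_sigma.mpr ⟨Finset.mem_image_of_mem _ hx, Finset.mem_univ _⟩
    have h2 : S.card ≤ ∑ j ∈ T, p j := by
      calc S.card ≤ (T.sigma fun j => (Finset.univ : Finset (Fin (p j)))).card :=
            Finset.card_le_card h1
        _ = ∑ j ∈ T, p j := by simp [Finset.card_sigma]
    have h3 : (S.biUnion fun x => Finset.Ico (r x.1) (d x.1)) =
        T.biUnion fun j => Finset.Ico (r j) (d j) := by
      ext a
      simp only [Finset.mem_biUnion, hT, Finset.mem_image]
      constructor
      · rintro ⟨x, hx, ha⟩; exact ⟨x.1, ⟨x, hx, rfl⟩, ha⟩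
      · rintro ⟨j, ⟨x, hx, rfl⟩, ha⟩; exact ⟨x, hx, ha⟩
    rw [h3]
    exact h2.trans (schedMain r d p h T)
  obtain ⟨f, hfinj, hf⟩ :=
    (Finset.all_card_le_biUnion_card_iff_exists_injective
      (fun x : Σ j : J, Fin (p j) => Finset.Ico (r x.1) (d x.1))).mp hall
  refine ⟨fun j => (Finset.univ : Finset (Fin (p j))).image (fun k => f ⟨j, k⟩), ?_, ?_, ?_⟩
  · intro j j' hjj'
    rw [Finset.disjoint_left]
    intro a ha ha'
    obtain ⟨k, _, hk⟩ := Finset.mem_image.mp ha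
    obtain ⟨k', _, hk'⟩ := Finset.mem_image.mp ha'
    have := hfinj (hk.trans hk'.symm)
    exact hjj' (congrArg Sigma.fst this)
  · intro j
    rw [Finset.card_image_of_injective _ (fun k k' hkk' => by
      have := hfinj hkk'
      exact eq_of_heq (Sigma.mk.inj_iff.mp this).2)]
    simp
  · intro j a ha
    obtain ⟨k, _, hk⟩ := Finset.mem_image.mp ha
    have := hf ⟨j, k⟩
    rw [hk, Finset.mem_Ico] at this
    exact this
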